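/- Let G be a finite simple connected block graph (every block of G is a complete graph) with exactly ℓ blocks. Then the Radon number of G with respect to Δ-convexity satisfies r_Δ(G) = ℓ + 1. -/

import Mathlib

variable {V : Type*}

/-- A set `S` is Δ-convex in `G` if every vertex adjacent to two adjacent vertices of `S`
belongs to `S`. -/
def DeltaConvex (G : SimpleGraph V) (S : Set V) : Prop :=
  ∀ ⦃u v w : V⦄, u ∈ S → v ∈ S → G.Adj u v → G.Adj w u → G.Adj w v → w ∈ S

/-- The Δ-convex hull of `S`: the smallest Δ-convex set containing `S`. -/
def deltaHull (G : SimpleGraph V) (S : Set V) : Set V :=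
  ⋂₀ {T : Set V | S ⊆ T ∧ DeltaConvex G T}

/-- `S` is Helly independent: the intersection of the hulls of the sets `S \ {a}`, `a ∈ S`,
is empty. -/
def HellyIndep (G : SimpleGraph V) (S : Set V) : Prop :=
  (⋂ a ∈ S, deltaHull G (S \ {a})) = ∅

/-- The Helly number of `G` w.r.t. Δ-convexity: the maximum cardinality of a Helly
independent subset of the vertex set. -/
noncomputable def hellyNumber (G : SimpleGraph V) : ℕ :=
  sSup {n : ℕ | ∃ S : Set V, HellyIndep G S ∧ S.ncard = n}

/-- `S` is Radon independent: no partition of `S` into two nonempty disjoint parts has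
intersecting hulls. -/
def RadonIndep (G : SimpleGraph V) (S : Set V) : Prop :=
  ¬ ∃ S₁ S₂ : Set V, S₁ ∪ S₂ = S ∧ Disjoint S₁ S₂ ∧ S₁.Nonempty ∧ S₂.Nonempty ∧
    (deltaHull G S₁ ∩ deltaHull G S₂).Nonempty

/-- The Radon number of `G` w.r.t. Δ-convexity. -/
noncomputable def radonNumber (G : SimpleGraph V) : ℕ :=
  sSup {n : ℕ | ∃ S : Set V, RadonIndep G S ∧ S.ncard = n}

/-- `S` is convexly independent: `a ∉ ⟨S \ {a}⟩` for every `a ∈ S`. -/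
def ConvIndep (G : SimpleGraph V) (S : Set V) : Prop :=
  ∀ a ∈ S, a ∉ deltaHull G (S \ {a})

/-- The rank of `G` w.r.t. Δ-convexity. -/
noncomputable def rankDelta (G : SimpleGraph V) : ℕ :=
  sSup {n : ℕ | ∃ S : Set V, ConvIndep G S ∧ S.ncard = n}

/-- The independence number: maximum cardinality of a set of pairwise non-adjacent
vertices. -/
noncomputable def alphaNum (G : SimpleGraph V) : ℕ :=
  sSup {n : ℕ | ∃ S : Set V, S.Pairwise (fun a b => ¬ G.Adj a b) ∧ S.ncard = n}

/-- `G` is 2-connected: at least 3 vertices, connected, and deleting any single vertex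
leaves a connected graph. -/
def TwoConnected (G : SimpleGraph V) : Prop :=
  3 ≤ Nat.card V ∧ G.Connected ∧ ∀ v : V, (G.induce {u : V | u ≠ v}).Connected

/-- `G` is chordal: every cycle of length at least 4 has a chord, i.e. an edge of `G`
joining two vertices of the cycle that is not an edge of the cycle. -/
def ChordalGraph (G : SimpleGraph V) : Prop :=
  ∀ (v : V) (c : G.Walk v v), c.IsCycle → 4 ≤ c.length →
    ∃ x y : V, x ∈ c.support ∧ y ∈ c.support ∧ G.Adj x y ∧ s(x, y) ∉ c.edges

/-- `B` induces a connected subgraph of `G` with at least two vertices and no cut vertex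
(so: an edge, or a 2-connected subgraph). -/
def NoCutSet (G : SimpleGraph V) (B : Set V) : Prop :=
  2 ≤ B.ncard ∧ (G.induce B).Connected ∧ ∀ v ∈ B, (G.induce (B \ {v})).Connected

/-- `B` is (the vertex set of) a block of `G`: a maximal 2-connected subgraph, where a
bridge together with its endpoints also counts as a block. -/
def IsBlock (G : SimpleGraph V) (B : Set V) : Prop :=
  NoCutSet G B ∧ ∀ B' : Set V, NoCutSet G B' → B ⊆ B' → B = B'

/-- The set `B` induces a complete subgraph of `G`. -/
def CompleteOn (G : SimpleGraph V) (B : Set V) : Prop :=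
  ∀ u ∈ B, ∀ v ∈ B, u ≠ v → G.Adj u v

set_option linter.unusedSectionVars false

namespace BGaux

/-- adjacency within a set -/
def Rel (G : SimpleGraph V) (S : Set V) (a b : V) : Prop := G.Adj a b ∧ a ∈ S ∧ b ∈ S

/-- connectivity of the induced graph, expressed without subtypes -/
def ConnOn (G : SimpleGraph V) (S : Set V) : Prop :=
  S.Nonempty ∧ ∀ x ∈ S, ∀ y ∈ S, Relation.ReflTransGen (Rel G S) x y

variable {G : SimpleGraph V}

lemma reach_of_rtg {S : Set V} {x y : V} (h : Relation.ReflTransGen (Rel G S) x y)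
    (hx : x ∈ S) (hy : y ∈ S) : (G.induce S).Reachable ⟨x, hx⟩ ⟨y, hy⟩ := by
  induction h with
  | refl => rfl
  | @tail b c hxb hbc ih =>
    exact (ih hbc.2.1).trans (SimpleGraph.Adj.reachable (by exact hbc.1))

lemma induce_connected_iff {S : Set V} : (G.induce S).Connected ↔ ConnOn G S := by
  constructor
  · intro hc
    obtain ⟨x⟩ := hc.nonempty
    refine ⟨⟨x.1, x.2⟩, ?_⟩
    intro a ha b hb
    have hr := hc.preconnected ⟨a, ha⟩ ⟨b, hb⟩
    have := (SimpleGraph.reachable_iff_reflTransGen _ _).mp hr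
    exact Relation.ReflTransGen.lift Subtype.val (fun p q hpq => ⟨hpq, p.2, q.2⟩) _ _ this
  · rintro ⟨⟨x, hx⟩, h⟩
    have hpre : (G.induce S).Preconnected := by
      rintro ⟨a, ha⟩ ⟨b, hb⟩
      exact reach_of_rtg (h a ha b hb) ha hb
    have : Nonempty ↑S := ⟨⟨x, hx⟩⟩
    exact SimpleGraph.Connected.mk hpre

lemma ConnOn.mono_rel {S T : Set V} (hST : S ⊆ T) {x y : V}
    (h : Relation.ReflTransGen (Rel G S) x y) : Relation.ReflTransGen (Rel G T) x y :=
  Relation.ReflTransGen.mono (fun _ _ hr => ⟨hr.1, hST hr.2.1, hST hr.2.2⟩) _ _ h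

lemma rel_symm {S : Set V} : Symmetric (Rel G S) :=
  fun _ _ hab => ⟨hab.1.symm, hab.2.2, hab.2.1⟩

lemma rtg_symm {S : Set V} {x y : V} (h : Relation.ReflTransGen (Rel G S) x y) :
    Relation.ReflTransGen (Rel G S) y x :=
  by
    haveI : Std.Symm (Rel G S) := ⟨fun _ _ hab => rel_symm hab⟩
    exact (Relation.ReflTransGen.symmetric (r := Rel G S)).symm _ _ h

lemma ConnOn.union {S T : Set V} (hS : ConnOn G S) (hT : ConnOn G T)
    (hst : (S ∩ T).Nonempty) : ConnOn G (S ∪ T) := by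
  obtain ⟨z, hzS, hzT⟩ := hst
  refine ⟨⟨z, Or.inl hzS⟩, ?_⟩
  have key : ∀ x ∈ S ∪ T, Relation.ReflTransGen (Rel G (S ∪ T)) x z := by
    rintro x (hx | hx)
    · exact ConnOn.mono_rel Set.subset_union_left (hS.2 x hx z hzS)
    · exact ConnOn.mono_rel Set.subset_union_right (hT.2 x hx z hzT)
  intro x hx y hy
  exact (key x hx).trans (rtg_symm (key y hy))

lemma ConnOn.singleton (G : SimpleGraph V) (x : V) : ConnOn G {x} := by
  refine ⟨⟨x, rfl⟩, ?_⟩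
  rintro a rfl b rfl
  rfl

lemma ConnOn.ofComplete {S : Set V} (hS : CompleteOn G S) (hne : S.Nonempty) : ConnOn G S := by
  refine ⟨hne, fun x hx y hy => ?_⟩
  rcases eq_or_ne x y with rfl | hxy
  · rfl
  · exact Relation.ReflTransGen.single ⟨hS x hx y hy hxy, hx, hy⟩

lemma connOn_insert {S : Set V} (hS : ConnOn G S) {y x : V} (hx : x ∈ S) (hadj : G.Adj y x) :
    ConnOn G (insert y S) := by
  have h1 : ConnOn G {y, x} := by
    refine ⟨⟨y, Or.inl rfl⟩, ?_⟩
    have hyx : Relation.ReflTransGen (Rel G {y, x}) y x :=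
      Relation.ReflTransGen.single ⟨hadj, Or.inl rfl, Or.inr rfl⟩
    rintro a (rfl | rfl) b (rfl | rfl)
    · rfl
    · exact hyx
    · exact rtg_symm hyx
    · rfl
  have := h1.union hS ⟨x, Or.inr rfl, hx⟩
  have he : ({y, x} : Set V) ∪ S = insert y S := by
    ext a; simp only [Set.mem_union, Set.mem_insert_iff, Set.mem_singleton_iff]
    constructor
    · rintro ((rfl | rfl) | h) <;> [exact Or.inl rfl; exact Or.inr hx; exact Or.inr h]
    · rintro (rfl | h) <;> [exact Or.inl (Or.inl rfl); exact Or.inr h]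
  rwa [he] at this

/-- support of a walk is connected -/
lemma connOn_support {u v : V} (w : G.Walk u v) : ConnOn G {x | x ∈ w.support} := by
  induction w with
  | nil => simpa using ConnOn.singleton G _
  | @cons a b c hab q ih =>
    have : ({x | x ∈ (SimpleGraph.Walk.cons hab q).support} : Set V)
        = insert a {x | x ∈ q.support} := by
      ext x; simp
    rw [this]
    exact connOn_insert ih q.start_mem_support hab

lemma rtg_of_walk_subset {u v : V} (w : G.Walk u v) {S : Set V} (hs : ∀ x ∈ w.support, x ∈ S) :
    Relation.ReflTransGen (Rel G S) u v := by
  induction w with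
  | nil => rfl
  | @cons a b c hab q ih =>
    refine Relation.ReflTransGen.head ⟨hab, hs a (by simp), hs b (by simp)⟩ (ih ?_)
    intro x hx; exact hs x (by simp [hx])


section Hull
variable {G : SimpleGraph V}

lemma subset_hull (S : Set V) : S ⊆ deltaHull G S := by
  intro x hx T hT; exact hT.1 hx

lemma hull_convex (S : Set V) : DeltaConvex G (deltaHull G S) := by
  intro u v w hu hv huv hwu hwv T hT
  exact hT.2 (hu T hT) (hv T hT) huv hwu hwv

lemma hull_min {S T : Set V} (hST : S ⊆ T) (hT : DeltaConvex G T) : deltaHull G S ⊆ T :=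
  fun _ hx => hx T ⟨hST, hT⟩

lemma hull_mono {S T : Set V} (hST : S ⊆ T) : deltaHull G S ⊆ deltaHull G T :=
  hull_min (hST.trans (subset_hull T)) (hull_convex T)

lemma hull_empty : deltaHull G (∅ : Set V) = ∅ := by
  apply Set.eq_empty_iff_forall_notMem.mpr
  intro x hx
  exact (hull_min (Set.Subset.refl ∅) (fun u v w hu => hu.elim) hx)

lemma convex_hull_eq {S : Set V} (h : DeltaConvex G S) : deltaHull G S = S :=
  Set.Subset.antisymm (hull_min (Set.Subset.refl S) h) (subset_hull S)

lemma hull_subset_of_mem_convex {S T : Set V} (hT : DeltaConvex G T) (h : S ⊆ T) :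
    deltaHull G S ⊆ T := hull_min h hT

end Hull


section Blocks
variable {G : SimpleGraph V}

lemma noCutSet_connOn {B : Set V} (h : NoCutSet G B) : ConnOn G B :=
  induce_connected_iff.mp h.2.1

lemma noCutSet_connOn_diff {B : Set V} (h : NoCutSet G B) (v : V) : ConnOn G (B \ {v}) := by
  by_cases hv : v ∈ B
  · exact induce_connected_iff.mp (h.2.2 v hv)
  · have : B \ {v} = B := by
      ext x; simp only [Set.mem_diff, Set.mem_singleton_iff]
      exact ⟨fun h => h.1, fun hx => ⟨hx, fun he => hv (he ▸ hx)⟩⟩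
    rw [this]; exact noCutSet_connOn h

variable [Fintype V]

lemma noCutSet_of_complete {S : Set V} (hc : CompleteOn G S) (h2 : 2 ≤ S.ncard) :
    NoCutSet G S := by
  refine ⟨h2, induce_connected_iff.mpr (ConnOn.ofComplete hc ?_), fun v hv => ?_⟩
  · exact Set.nonempty_of_ncard_ne_zero (by omega)
  · refine induce_connected_iff.mpr (ConnOn.ofComplete ?_ ?_)
    · intro a ha b hb hab; exact hc a ha.1 b hb.1 hab
    · apply Set.nonempty_of_ncard_ne_zero
      have := Set.ncard_diff_singleton_of_mem hv
      omega

lemma completeOn_pair {u v : V} (h : G.Adj u v) : CompleteOn G {u, v} := by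
  rintro a (rfl | rfl) b (rfl | rfl) hab
  · exact absurd rfl hab
  · exact h
  · exact h.symm
  · exact absurd rfl hab

lemma noCutSet_pair {u v : V} (h : G.Adj u v) : NoCutSet G {u, v} :=
  noCutSet_of_complete (completeOn_pair h) (by rw [Set.ncard_pair h.ne])

lemma noCutSet_triangle {u v w : V} (huv : G.Adj u v) (hwu : G.Adj w u) (hwv : G.Adj w v) :
    NoCutSet G {u, v, w} := by
  apply noCutSet_of_complete
  · rintro a (rfl | rfl | rfl) b (rfl | rfl | rfl) hab
    · exact absurd rfl hab
    · exact huv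
    · exact hwu.symm
    · exact huv.symm
    · exact absurd rfl hab
    · exact hwv.symm
    · exact hwu
    · exact hwv
    · exact absurd rfl hab
  · have : ({u, v} : Set V) ⊆ {u, v, w} := by intro x hx; rcases hx with rfl | rfl <;> simp
    calc 2 = ({u, v} : Set V).ncard := (Set.ncard_pair huv.ne).symm
    _ ≤ _ := Set.ncard_le_ncard this (Set.toFinite _)

lemma exists_block_superset {S : Set V} (hS : NoCutSet G S) : ∃ B, IsBlock G B ∧ S ⊆ B := by
  classical
  set N : Set ℕ := {n | ∃ T : Set V, NoCutSet G T ∧ S ⊆ T ∧ T.ncard = n} with hN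
  have hne : N.Nonempty := ⟨S.ncard, S, hS, Set.Subset.refl S, rfl⟩
  have hbdd : BddAbove N := by
    refine ⟨Fintype.card V, ?_⟩
    rintro n ⟨T, _, _, rfl⟩
    have := Set.ncard_le_ncard (Set.subset_univ T) Set.finite_univ
    simpa [Set.ncard_univ, Nat.card_eq_fintype_card] using this
  obtain ⟨T, hT, hST, hTn⟩ := Nat.sSup_mem hne hbdd
  refine ⟨T, ⟨hT, fun B' hB' hTB' => ?_⟩, hST⟩
  have : B'.ncard ∈ N := ⟨B', hB', hST.trans hTB', rfl⟩
  exact Set.eq_of_subset_of_ncard_le hTB' (hTn ▸ le_csSup hbdd this) (Set.toFinite B')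

lemma block_eq_of_two_mem {B₁ B₂ : Set V} (h₁ : IsBlock G B₁) (h₂ : IsBlock G B₂)
    {x y : V} (hx1 : x ∈ B₁) (hx2 : x ∈ B₂) (hy1 : y ∈ B₁) (hy2 : y ∈ B₂) (hxy : x ≠ y) :
    B₁ = B₂ := by
  have hU : NoCutSet G (B₁ ∪ B₂) := by
    refine ⟨le_trans h₁.1.1 (Set.ncard_le_ncard Set.subset_union_left (Set.toFinite _)),
      induce_connected_iff.mpr ((noCutSet_connOn h₁.1).union (noCutSet_connOn h₂.1) ⟨x, hx1, hx2⟩), fun v hv => ?_⟩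
    apply induce_connected_iff.mpr
    have : (B₁ ∪ B₂) \ {v} = (B₁ \ {v}) ∪ (B₂ \ {v}) := Set.union_diff_distrib
    rw [this]
    apply (noCutSet_connOn_diff h₁.1 v).union (noCutSet_connOn_diff h₂.1 v)
    rcases eq_or_ne v x with rfl | hvx
    · exact ⟨y, ⟨hy1, hxy.symm⟩, ⟨hy2, hxy.symm⟩⟩
    · exact ⟨x, ⟨hx1, fun h => hvx h.symm⟩, ⟨hx2, fun h => hvx h.symm⟩⟩
  have e1 := h₁.2 _ hU Set.subset_union_left
  have e2 := h₂.2 _ hU Set.subset_union_right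
  rw [e1, ← e2]

lemma exists_block_of_adj {u v : V} (h : G.Adj u v) :
    ∃ B, IsBlock G B ∧ u ∈ B ∧ v ∈ B := by
  obtain ⟨B, hB, hsub⟩ := exists_block_superset (noCutSet_pair h)
  exact ⟨B, hB, hsub (by simp), hsub (by simp)⟩

lemma mem_block_of_triangle {B : Set V} (hB : IsBlock G B) {u v w : V}
    (hu : u ∈ B) (hv : v ∈ B) (huv : G.Adj u v) (hwu : G.Adj w u) (hwv : G.Adj w v) :
    w ∈ B := by
  obtain ⟨B', hB', hsub⟩ := exists_block_superset (noCutSet_triangle huv hwu hwv)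
  have : B = B' := block_eq_of_two_mem hB hB' hu (hsub (by simp)) hv (hsub (by simp)) huv.ne
  exact this ▸ hsub (by simp)

lemma block_convex {B : Set V} (hB : IsBlock G B) : DeltaConvex G B :=
  fun _ _ _ hu hv huv hwu hwv => mem_block_of_triangle hB hu hv huv hwu hwv

/-- if a convex set contains two distinct vertices of a complete block, it contains the block -/
lemma block_subset_convex {B : Set V} (hB : IsBlock G B) (hc : CompleteOn G B)
    {T : Set V} (hT : DeltaConvex G T) {x y : V} (hx : x ∈ B) (hy : y ∈ B) (hxy : x ≠ y)
    (hxT : x ∈ T) (hyT : y ∈ T) : B ⊆ T := by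
  intro w hw
  rcases eq_or_ne w x with rfl | hwx
  · exact hxT
  rcases eq_or_ne w y with rfl | hwy
  · exact hyT
  exact hT hxT hyT (hc x hx y hy hxy) (hc w hw x hx hwx) (hc w hw y hy hwy)

end Blocks

section Gates
variable {G : SimpleGraph V} [DecidableEq V]

open SimpleGraph Walk

lemma connOn_support_diff_start {a b : V} (p : G.Walk a b) (hp : p.IsPath) (hne : a ≠ b) :
    ConnOn G ({x | x ∈ p.support} \ {a}) := by
  cases p with
  | nil => exact absurd rfl hne
  | cons h q =>
    have hs : ({x | x ∈ (Walk.cons h q).support} : Set V) \ {a} = {x | x ∈ q.support} := by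
      ext x
      simp only [Set.mem_diff, Set.mem_setOf_eq, Walk.support_cons, List.mem_cons,
        Set.mem_singleton_iff]
      constructor
      · rintro ⟨rfl | hx, hxa⟩
        · exact absurd rfl hxa
        · exact hx
      · intro hx
        refine ⟨Or.inr hx, fun he => ?_⟩
        rw [Walk.isPath_def] at hp
        simp only [Walk.support_cons] at hp
        exact (List.nodup_cons.mp hp).1 (he ▸ hx)
    rw [hs]
    exact connOn_support (G := G) q

lemma connOn_support_diff_end {a b : V} (p : G.Walk a b) (hp : p.IsPath) (hne : a ≠ b) :
    ConnOn G ({x | x ∈ p.support} \ {b}) := by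
  have := connOn_support_diff_start p.reverse hp.reverse hne.symm
  have hs : ({x | x ∈ p.reverse.support} : Set V) \ {b} = {x | x ∈ p.support} \ {b} := by
    ext x; simp [Walk.support_reverse]
  rwa [hs] at this

lemma support_take_drop {a b t : V} (p : G.Walk a b) (ht : t ∈ p.support) :
    ({x | x ∈ p.support} : Set V)
      = {x | x ∈ (p.takeUntil t ht).support} ∪ {x | x ∈ (p.dropUntil t ht).support} := by
  classical
  ext x
  simp only [Set.mem_union, Set.mem_setOf_eq]
  conv_lhs => rw [← p.take_spec ht]
  exact Walk.mem_support_append_iff _ _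

/-- first entry of a walk into a set -/
lemma exists_first_entry {B : Set V} {u z : V} (w : G.Walk u z) (hu : u ∉ B) (hz : z ∈ B) :
    ∃ e, ∃ w' : G.Walk u e, ({x | x ∈ w'.support} ∩ B) = {e} ∧
      ∀ x ∈ w'.support, x ∈ w.support := by
  induction w with
  | nil => exact absurd hz hu
  | @cons a c d h q ih =>
    by_cases hc : c ∈ B
    · refine ⟨c, Walk.cons h Walk.nil, ?_, ?_⟩
      · ext x
        simp only [Set.mem_inter_iff, Set.mem_setOf_eq, Walk.support_cons, Walk.support_nil,
          List.mem_cons, List.mem_singleton, Set.mem_singleton_iff]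
        constructor
        · rintro ⟨rfl | rfl | h', hB⟩
          · exact absurd hB hu
          · rfl
          · cases h'
        · rintro rfl; exact ⟨Or.inr (Or.inl rfl), hc⟩
      · intro x hx
        simp only [Walk.support_cons, Walk.support_nil, List.mem_cons, List.mem_singleton] at hx
        rcases hx with rfl | rfl | h'
        · simp
        · simp
        · cases h'
    · obtain ⟨e, w'', hcond, hsub⟩ := ih hc hz
      refine ⟨e, Walk.cons h w'', ?_, ?_⟩
      · ext x
        simp only [Set.mem_inter_iff, Set.mem_setOf_eq, Walk.support_cons, List.mem_cons,
          Set.mem_singleton_iff]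
        constructor
        · rintro ⟨rfl | hx, hB⟩
          · exact absurd hB hu
          · exact (Set.ext_iff.mp hcond x).mp ⟨hx, hB⟩
        · rintro rfl
          have := (Set.ext_iff.mp hcond x).mpr rfl
          exact ⟨Or.inr this.1, this.2⟩
      · intro x hx
        simp only [Walk.support_cons, List.mem_cons] at hx ⊢
        rcases hx with rfl | hx
        · exact Or.inl rfl
        · exact Or.inr (hsub x hx)

lemma path_pieces {B : Set V} {u e : V} (p : G.Walk u e) (hp : p.IsPath) (hue : u ≠ e)
    {v : V} (hv : v ∈ p.support) (hvu : v ≠ u) (hve : v ≠ e) :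
    ∃ T D : Set V, T ∪ D = {x | x ∈ p.support} \ {v} ∧ ConnOn G T ∧ ConnOn G D ∧
      u ∈ T ∧ e ∈ D := by
  refine ⟨{x | x ∈ (p.takeUntil v hv).support} \ {v},
    {x | x ∈ (p.dropUntil v hv).support} \ {v}, ?_, ?_, ?_, ?_, ?_⟩
  · rw [← Set.union_diff_distrib, ← support_take_drop p hv]
  · exact connOn_support_diff_end (p.takeUntil v hv) (hp.takeUntil hv) (fun h => hvu h.symm)
  · exact connOn_support_diff_start (p.dropUntil v hv) (hp.dropUntil hv) hve
  · exact ⟨(p.takeUntil v hv).start_mem_support, fun h => hvu (Eq.symm h)⟩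
  · exact ⟨(p.dropUntil v hv).end_mem_support, fun h => hve (Eq.symm h)⟩

lemma gate_unique [Fintype V] {B : Set V} (hB : IsBlock G B) :
    ∀ n : ℕ, ∀ {u e₁ e₂ : V} (w₁ : G.Walk u e₁) (w₂ : G.Walk u e₂), u ∉ B →
      w₁.length + w₂.length ≤ n →
      ({x | x ∈ w₁.support} ∩ B) = {e₁} → ({x | x ∈ w₂.support} ∩ B) = {e₂} →
      e₁ = e₂ := by
  intro n
  induction n with
  | zero =>
    intro u e₁ e₂ w₁ w₂ hu hlen h₁ h₂
    have he₁ : e₁ ∈ B := ((Set.ext_iff.mp h₁ e₁).mpr rfl).2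
    have : w₁.length = 0 := by omega
    exact absurd (SimpleGraph.Walk.eq_of_length_eq_zero this ▸ he₁) hu
  | succ n ih =>
    intro u e₁ e₂ w₁ w₂ hu hlen h₁ h₂
    by_contra hne
    have he₁ : e₁ ∈ B := ((Set.ext_iff.mp h₁ e₁).mpr rfl).2
    have he₂ : e₂ ∈ B := ((Set.ext_iff.mp h₂ e₂).mpr rfl).2
    have hue₁ : u ≠ e₁ := fun h => hu (h ▸ he₁)
    have hue₂ : u ≠ e₂ := fun h => hu (h ▸ he₂)
    set p₁ := w₁.bypass with hp₁def
    set p₂ := w₂.bypass with hp₂def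
    have hp₁ : p₁.IsPath := w₁.bypass_isPath
    have hp₂ : p₂.IsPath := w₂.bypass_isPath
    have hsub₁ := w₁.support_bypass_subset
    have hsub₂ := w₂.support_bypass_subset
    have cond₁ : ({x | x ∈ p₁.support} : Set V) ∩ B = {e₁} := by
      apply Set.Subset.antisymm
      · rintro x ⟨hx, hxB⟩
        exact (Set.ext_iff.mp h₁ x).mp ⟨hsub₁ hx, hxB⟩
      · rintro x rfl
        exact ⟨p₁.end_mem_support, he₁⟩
    have cond₂ : ({x | x ∈ p₂.support} : Set V) ∩ B = {e₂} := by
      apply Set.Subset.antisymm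
      · rintro x ⟨hx, hxB⟩
        exact (Set.ext_iff.mp h₂ x).mp ⟨hsub₂ hx, hxB⟩
      · rintro x rfl
        exact ⟨p₂.end_mem_support, he₂⟩
    by_cases hshare : ∃ s, s ∈ p₁.support ∧ s ∈ p₂.support ∧ s ≠ u ∧ s ∉ B
    · -- recurse from the shared vertex
      obtain ⟨s, hs₁, hs₂, hsu, hsB⟩ := hshare
      set d₁ := p₁.dropUntil s hs₁
      set d₂ := p₂.dropUntil s hs₂
      have dcond₁ : ({x | x ∈ d₁.support} : Set V) ∩ B = {e₁} := by
        apply Set.Subset.antisymm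
        · rintro x ⟨hx, hxB⟩
          exact (Set.ext_iff.mp cond₁ x).mp ⟨p₁.support_dropUntil_subset hs₁ hx, hxB⟩
        · rintro x rfl
          exact ⟨d₁.end_mem_support, he₁⟩
      have dcond₂ : ({x | x ∈ d₂.support} : Set V) ∩ B = {e₂} := by
        apply Set.Subset.antisymm
        · rintro x ⟨hx, hxB⟩
          exact (Set.ext_iff.mp cond₂ x).mp ⟨p₂.support_dropUntil_subset hs₂ hx, hxB⟩
        · rintro x rfl
          exact ⟨d₂.end_mem_support, he₂⟩
      have hlen₁ : (p₁.takeUntil s hs₁).length + d₁.length = p₁.length := by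
        have := congrArg SimpleGraph.Walk.length (p₁.take_spec hs₁)
        rwa [SimpleGraph.Walk.length_append] at this
      have hlen₂ : (p₂.takeUntil s hs₂).length + d₂.length = p₂.length := by
        have := congrArg SimpleGraph.Walk.length (p₂.take_spec hs₂)
        rwa [SimpleGraph.Walk.length_append] at this
      have ht₁ : (p₁.takeUntil s hs₁).length ≠ 0 := fun h =>
        hsu (SimpleGraph.Walk.eq_of_length_eq_zero h).symm
      have ht₂ : (p₂.takeUntil s hs₂).length ≠ 0 := fun h =>
        hsu (SimpleGraph.Walk.eq_of_length_eq_zero h).symm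
      have hbp₁ : p₁.length ≤ w₁.length := w₁.length_bypass_le
      have hbp₂ : p₂.length ≤ w₂.length := w₂.length_bypass_le
      exact hne (ih d₁ d₂ hsB (by omega) dcond₁ dcond₂)
    · -- supports share only u: build a larger 2-connected set
      push_neg at hshare
      set S₁ : Set V := {x | x ∈ p₁.support} with hS₁def
      set S₂ : Set V := {x | x ∈ p₂.support} with hS₂def
      have hu₁ : u ∈ S₁ := p₁.start_mem_support
      have hu₂ : u ∈ S₂ := p₂.start_mem_support
      have he₁S : e₁ ∈ S₁ := p₁.end_mem_support
      have he₂S : e₂ ∈ S₂ := p₂.end_mem_support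
      have hinter : ∀ x, x ∈ S₁ → x ∈ S₂ → x = u := by
        intro x hx₁ hx₂
        by_contra hxu
        have hxB : x ∉ B := by
          intro hxB
          have hxe₁ : x = e₁ := (Set.ext_iff.mp cond₁ x).mp ⟨hx₁, hxB⟩
          have hxe₂ : x = e₂ := (Set.ext_iff.mp cond₂ x).mp ⟨hx₂, hxB⟩
          exact hne (hxe₁ ▸ hxe₂)
        exact hxB (hshare x hx₁ hx₂ hxu)
      set U : Set V := B ∪ S₁ ∪ S₂ with hUdef
      have hBU : B ⊆ U := fun x hx => Or.inl (Or.inl hx)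
      have hS₁U : S₁ ⊆ U := fun x hx => Or.inl (Or.inr hx)
      have hconnS₁ : ConnOn G S₁ := connOn_support p₁
      have hconnS₂ : ConnOn G S₂ := connOn_support p₂
      have hconnB : ConnOn G B := noCutSet_connOn hB.1
      have hU : NoCutSet G U := by
        refine ⟨le_trans hB.1.1 (Set.ncard_le_ncard hBU (Set.toFinite _)), ?_, ?_⟩
        · exact induce_connected_iff.mpr
            (((hconnB.union hconnS₁ ⟨e₁, he₁, he₁S⟩)).union hconnS₂ ⟨e₂, Or.inl he₂, he₂S⟩)
        · intro v hv
          apply induce_connected_iff.mpr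
          have hUd : U \ {v} = (B \ {v}) ∪ (S₁ \ {v}) ∪ (S₂ \ {v}) := by
            rw [hUdef, Set.union_diff_distrib, Set.union_diff_distrib]
          by_cases hvB : v ∈ B
          · -- removing a vertex of B
            have hvu : v ≠ u := fun h => hu (h ▸ hvB)
            have hc₁ : ConnOn G (S₁ \ {v}) ∧ u ∈ S₁ \ {v} := by
              by_cases hv₁ : v ∈ S₁
              · have hve : v = e₁ := (Set.ext_iff.mp cond₁ v).mp ⟨hv₁, hvB⟩
                subst hve
                exact ⟨connOn_support_diff_end p₁ hp₁ hue₁, hu₁, fun h => hvu h.symm⟩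
              · rw [Set.diff_singleton_eq_self hv₁]
                exact ⟨hconnS₁, hu₁⟩
            have hc₂ : ConnOn G (S₂ \ {v}) ∧ u ∈ S₂ \ {v} := by
              by_cases hv₂ : v ∈ S₂
              · have hve : v = e₂ := (Set.ext_iff.mp cond₂ v).mp ⟨hv₂, hvB⟩
                subst hve
                exact ⟨connOn_support_diff_end p₂ hp₂ hue₂, hu₂, fun h => hvu h.symm⟩
              · rw [Set.diff_singleton_eq_self hv₂]
                exact ⟨hconnS₂, hu₂⟩
            have hX : ConnOn G ((S₁ \ {v}) ∪ (S₂ \ {v})) :=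
              hc₁.1.union hc₂.1 ⟨u, hc₁.2, hc₂.2⟩
            have hor : e₁ ≠ v ∨ e₂ ≠ v := by
              by_contra h
              push_neg at h
              exact hne (h.1.trans h.2.symm)
            have hBv : ConnOn G (B \ {v}) := noCutSet_connOn_diff hB.1 v
            have hglue : ConnOn G ((B \ {v}) ∪ ((S₁ \ {v}) ∪ (S₂ \ {v}))) := by
              apply hBv.union hX
              rcases hor with h | h
              · exact ⟨e₁, ⟨he₁, h⟩, Or.inl ⟨he₁S, h⟩⟩
              · exact ⟨e₂, ⟨he₂, h⟩, Or.inr ⟨he₂S, h⟩⟩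
            rwa [hUd, Set.union_assoc]
          · rcases eq_or_ne v u with rfl | hvu
            · -- removing the junction u
              have hBv : B \ {v} = B := Set.diff_singleton_eq_self hvB
              have hc₁ : ConnOn G (S₁ \ {v}) := connOn_support_diff_start p₁ hp₁ hue₁
              have hc₂ : ConnOn G (S₂ \ {v}) := connOn_support_diff_start p₂ hp₂ hue₂
              have hglue : ConnOn G ((B ∪ (S₁ \ {v})) ∪ (S₂ \ {v})) := by
                refine (hconnB.union hc₁ ⟨e₁, he₁, he₁S, fun h => hue₁ h.symm⟩).union hc₂
                  ⟨e₂, Or.inl he₂, he₂S, fun h => hue₂ h.symm⟩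
              rwa [hUd, hBv]
            · by_cases hv₁ : v ∈ S₁
              · -- removing an interior vertex of p₁
                have hve₁ : v ≠ e₁ := fun h => hvB (h ▸ he₁)
                have hv₂ : v ∉ S₂ := fun h2 => hvu (hinter v hv₁ h2)
                obtain ⟨T, D, hTD, hTc, hDc, huT, heD⟩ :=
                  path_pieces (B := B) p₁ hp₁ hue₁ hv₁ hvu hve₁
                have hBv : B \ {v} = B := Set.diff_singleton_eq_self hvB
                have hS₂v : S₂ \ {v} = S₂ := Set.diff_singleton_eq_self hv₂
                have hglue : ConnOn G ((((B ∪ S₂) ∪ D) ∪ T)) := by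
                  refine (((hconnB.union hconnS₂ ⟨e₂, he₂, he₂S⟩).union hDc
                    ⟨e₁, Or.inl he₁, heD⟩).union hTc ⟨u, Or.inl (Or.inr hu₂), huT⟩)
                have heq : (((B ∪ S₂) ∪ D) ∪ T) = U \ {v} := by
                  rw [hUd, hBv, hS₂v, ← hTD]
                  ext x
                  simp only [Set.mem_union]
                  tauto
                rwa [heq] at hglue
              · -- v must be an interior vertex of p₂ (or outside U)
                by_cases hv₂ : v ∈ S₂
                · have hve₂ : v ≠ e₂ := fun h => hvB (h ▸ he₂)
                  obtain ⟨T, D, hTD, hTc, hDc, huT, heD⟩ :=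
                    path_pieces (B := B) p₂ hp₂ hue₂ hv₂ hvu hve₂
                  have hBv : B \ {v} = B := Set.diff_singleton_eq_self hvB
                  have hS₁v : S₁ \ {v} = S₁ := Set.diff_singleton_eq_self hv₁
                  have hglue : ConnOn G ((((B ∪ S₁) ∪ D) ∪ T)) := by
                    refine (((hconnB.union hconnS₁ ⟨e₁, he₁, he₁S⟩).union hDc
                      ⟨e₂, Or.inl he₂, heD⟩).union hTc ⟨u, Or.inl (Or.inr hu₁), huT⟩)
                  have heq : (((B ∪ S₁) ∪ D) ∪ T) = U \ {v} := by
                    rw [hUd, hBv, hS₁v, ← hTD]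
                    ext x
                    simp only [Set.mem_union]
                    tauto
                  rwa [heq] at hglue
                · exact absurd hv (by
                    intro h
                    rcases h with (h | h) | h
                    · exact hvB h
                    · exact hv₁ h
                    · exact hv₂ h)
      have hBU' : B = U := hB.2 U hU hBU
      exact hu (hBU' ▸ hS₁U hu₁)

end Gates

section Dist
variable {G : SimpleGraph V} [DecidableEq V]

lemma dist_take_of_shortest (hconn : G.Connected) {r x : V} (w : G.Walk r x)
    (hw : w.length = G.dist r x) {y : V} (hy : y ∈ w.support) :
    G.dist r y = (w.takeUntil y hy).length := by
  have ht : (w.takeUntil y hy).length + (w.dropUntil y hy).length = w.length := by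
    have := congrArg SimpleGraph.Walk.length (w.take_spec hy)
    rwa [SimpleGraph.Walk.length_append] at this
  have h1 : G.dist r y ≤ (w.takeUntil y hy).length := SimpleGraph.dist_le _
  have h2 : G.dist y x ≤ (w.dropUntil y hy).length := SimpleGraph.dist_le _
  have h3 : G.dist r x ≤ G.dist r y + G.dist y x := hconn.dist_triangle
  omega

lemma eq_end_of_dist_eq_length (hconn : G.Connected) {r x : V} (w : G.Walk r x)
    (hw : w.length = G.dist r x) {y : V} (hy : y ∈ w.support)
    (hd : G.dist r y = w.length) : y = x := by
  have h1 := dist_take_of_shortest hconn w hw hy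
  have ht : (w.takeUntil y hy).length + (w.dropUntil y hy).length = w.length := by
    have := congrArg SimpleGraph.Walk.length (w.take_spec hy)
    rwa [SimpleGraph.Walk.length_append] at this
  have h2 : (w.takeUntil y hy).length ≤ w.length := w.length_takeUntil_le hy
  have : (w.dropUntil y hy).length = 0 := by omega
  exact SimpleGraph.Walk.eq_of_length_eq_zero this

lemma dist_lt_of_mem_shortest (hconn : G.Connected) {r x : V} (w : G.Walk r x)
    (hw : w.length = G.dist r x) {y : V} (hy : y ∈ w.support) (hne : y ≠ x) :
    G.dist r y < w.length := by
  have h1 := dist_take_of_shortest hconn w hw hy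
  have h2 : (w.takeUntil y hy).length ≤ w.length := w.length_takeUntil_le hy
  rcases lt_or_eq_of_le h2 with h | h
  · omega
  · exact absurd (eq_end_of_dist_eq_length hconn w hw hy (h1.trans h)) hne

end Dist

section LeafBlock
variable {G : SimpleGraph V} [Fintype V] [DecidableEq V]

/-- every finite connected block graph with a block has a leaf block -/
lemma exists_leaf_block (hconn : G.Connected) (hbg : ∀ B : Set V, IsBlock G B → CompleteOn G B)
    {B₀ : Set V} (hB₀ : IsBlock G B₀) :
    ∃ B c, IsBlock G B ∧ c ∈ B ∧ ∀ x ∈ B \ {c}, ∀ y, G.Adj x y → y ∈ B := by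
  classical
  obtain ⟨r⟩ := hconn.nonempty
  set dmin : Set V → ℕ := fun C => sInf (G.dist r '' C) with hdmin
  obtain ⟨B, hBblocks, hBmax⟩ := Set.exists_max_image {C | IsBlock G C} dmin
    (Set.toFinite _) ⟨B₀, hB₀⟩
  have hB : IsBlock G B := hBblocks
  have hBne : B.Nonempty := Set.nonempty_of_ncard_ne_zero (by have := hB.1.1; omega)
  have himne : (G.dist r '' B).Nonempty := hBne.image _
  obtain ⟨c, hcB, hcd⟩ : ∃ c ∈ B, G.dist r c = dmin B := by
    obtain ⟨d, hd⟩ := Nat.sInf_mem himne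
    exact ⟨d, hd.1, hd.2⟩
  set k := dmin B with hk
  have hF0 : ∀ v ∈ B, k ≤ G.dist r v := fun v hv => Nat.sInf_le ⟨v, hv, rfl⟩
  have hBcomp : CompleteOn G B := hbg B hB
  -- a shortest path to c
  obtain ⟨wc, hwcp, hwcl⟩ := hconn.exists_path_of_dist r c
  have hwcl' : wc.length = G.dist r c := hwcl
  -- uniqueness of the closest vertex
  have hG2 : ∀ v ∈ B, G.dist r v = k → v = c := by
    intro v hv hvd
    by_cases hrB : r ∈ B
    · have hrr : G.dist r r = 0 := SimpleGraph.dist_self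
      have hk0 : k = 0 := Nat.le_antisymm (hrr ▸ hF0 r hrB) (Nat.zero_le _)
      have h1 : r = v := (hconn.dist_eq_zero_iff).mp (by omega)
      have h2 : r = c := (hconn.dist_eq_zero_iff).mp (by omega)
      exact h1 ▸ h2
    · -- first entries of shortest paths are the endpoints, and gates are unique
      obtain ⟨wv, hwvp, hwvl⟩ := hconn.exists_path_of_dist r v
      obtain ⟨e, w', hcond, hsubs⟩ := exists_first_entry wv hrB hv
      have heB : e ∈ B := ((Set.ext_iff.mp hcond e).mpr rfl).2
      have heS : e ∈ wv.support := hsubs e w'.end_mem_support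
      have hde : G.dist r e = k := by
        have h1 : G.dist r e ≤ wv.length := by
          have := dist_take_of_shortest hconn wv hwvl heS
          have := wv.length_takeUntil_le heS
          omega
        have := hF0 e heB
        omega
      have hev : e = v := eq_end_of_dist_eq_length hconn wv hwvl heS (by omega)
      obtain ⟨ec, wc', hcondc, hsubsc⟩ := exists_first_entry wc hrB hcB
      have hecB : ec ∈ B := ((Set.ext_iff.mp hcondc ec).mpr rfl).2
      have hecS : ec ∈ wc.support := hsubsc ec wc'.end_mem_support
      have hdec : G.dist r ec = k := by
        have h1 : G.dist r ec ≤ wc.length := by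
          have := dist_take_of_shortest hconn wc hwcl' hecS
          have := wc.length_takeUntil_le hecS
          omega
        have := hF0 ec hecB
        omega
      have hec : ec = c := eq_end_of_dist_eq_length hconn wc hwcl' hecS (by omega)
      have := gate_unique hB (w'.length + wc'.length) w' wc' hrB le_rfl hcond hcondc
      rw [hev, hec] at this
      exact this
  have hG3 : ∀ x ∈ B, x ≠ c → k + 1 ≤ G.dist r x := by
    intro x hxB hxc
    have h1 := hF0 x hxB
    rcases Nat.eq_or_lt_of_le h1 with h | h
    · exact absurd (hG2 x hxB h.symm) hxc
    · omega
  have hK1 : ({x | x ∈ wc.support} : Set V) ∩ B = {c} := by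
    apply Set.Subset.antisymm
    · rintro v' ⟨hv's, hv'B⟩
      have h1 : G.dist r v' ≤ wc.length := by
        have := dist_take_of_shortest hconn wc hwcl' hv's
        have := wc.length_takeUntil_le hv's
        omega
      have h2 := hF0 v' hv'B
      exact hG2 v' hv'B (by omega)
    · rintro v' rfl
      exact ⟨wc.end_mem_support, hcB⟩
  refine ⟨B, c, hB, hcB, ?_⟩
  rintro x ⟨hxB, hxc'⟩ y hadj
  have hxc : x ≠ c := hxc'
  by_contra hyB
  obtain ⟨B₂, hB₂, hxB₂, hyB₂⟩ := exists_block_of_adj hadj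
  have hK2 : ∀ z, z ∈ B → z ∈ B₂ → z = x := by
    intro z hz hz₂
    by_contra hzx
    have heq := block_eq_of_two_mem hB hB₂ hxB hxB₂ hz hz₂ (fun h => hzx h.symm)
    rw [← heq] at hyB₂
    exact hyB hyB₂
  have hdx : k + 1 ≤ G.dist r x := hG3 x hxB hxc
  have hrB₂ : r ∉ B₂ := by
    intro hr₂
    by_cases hrB : r ∈ B
    · have hrx := hK2 r hrB hr₂
      have : G.dist r x = 0 := hrx ▸ (SimpleGraph.dist_self : G.dist r r = 0)
      omega
    · have hrx : r ≠ x := fun h => hrB (h ▸ hxB)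
      have hadjrx : G.Adj r x := hbg B₂ hB₂ r hr₂ x hxB₂ hrx
      have hcondw : ({z | z ∈ (SimpleGraph.Walk.cons hadjrx SimpleGraph.Walk.nil).support} :
          Set V) ∩ B = {x} := by
        apply Set.Subset.antisymm
        · rintro z ⟨hz, hzB⟩
          simp only [Set.mem_setOf_eq, SimpleGraph.Walk.support_cons,
            SimpleGraph.Walk.support_nil, List.mem_cons, List.mem_singleton] at hz
          rcases hz with rfl | rfl | h
          · exact absurd hzB hrB
          · rfl
          · cases h
        · rintro z rfl
          exact ⟨by simp, hxB⟩
      exact hxc (gate_unique hB _ _ wc hrB le_rfl hcondw hK1)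
  have hwx : ∃ wx : G.Walk r x, ({z | z ∈ wx.support} : Set V) ∩ B₂ = {x} := by
    by_cases hrB : r ∈ B
    · have hrx : r ≠ x := by
        intro h
        have : G.dist r x = 0 := h ▸ (SimpleGraph.dist_self : G.dist r r = 0)
        omega
      have hadjrx : G.Adj r x := hBcomp r hrB x hxB hrx
      refine ⟨SimpleGraph.Walk.cons hadjrx SimpleGraph.Walk.nil, ?_⟩
      apply Set.Subset.antisymm
      · rintro z ⟨hz, hzB₂⟩
        simp only [Set.mem_setOf_eq, SimpleGraph.Walk.support_cons,
          SimpleGraph.Walk.support_nil, List.mem_cons, List.mem_singleton] at hz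
        rcases hz with rfl | rfl | h
        · exact absurd hzB₂ hrB₂
        · rfl
        · cases h
      · rintro z rfl
        exact ⟨by simp, hxB₂⟩
    · by_cases hint : ∃ v', v' ∈ wc.support ∧ v' ∈ B₂
      · exfalso
        obtain ⟨v', hv's, hv'B₂⟩ := hint
        have hv'x : v' ≠ x := by
          intro h
          subst h
          have h1 := dist_take_of_shortest hconn wc hwcl' hv's
          have h2 := wc.length_takeUntil_le hv's
          omega
        have hv'c : v' ≠ c := by
          intro h
          subst h
          exact hxc ((hK2 v' hcB hv'B₂).symm ▸ rfl)
        have htB : ∀ z ∈ (wc.takeUntil v' hv's).support, z ∉ B := by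
          intro z hz hzB
          have hzc : z = c :=
            (Set.ext_iff.mp hK1 z).mp ⟨wc.support_takeUntil_subset hv's hz, hzB⟩
          rw [hzc] at hz
          have hnd := hwcp.support_nodup
          have hsp : wc.support
              = (wc.takeUntil v' hv's).support ++ (wc.dropUntil v' hv's).support.tail := by
            conv_lhs => rw [← wc.take_spec hv's]
            exact SimpleGraph.Walk.support_append _ _
          rw [hsp] at hnd
          have hcd : c ∈ (wc.dropUntil v' hv's).support.tail := by
            have h1 : c ∈ (wc.dropUntil v' hv's).support :=
              SimpleGraph.Walk.end_mem_support _
            rw [SimpleGraph.Walk.support_eq_cons (wc.dropUntil v' hv's)] at h1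
            rcases List.mem_cons.mp h1 with h1 | h1
            · exact absurd h1.symm hv'c
            · exact h1
          exact (List.nodup_append'.mp hnd).2.2 hz hcd
        have hadjv'x : G.Adj v' x := hbg B₂ hB₂ v' hv'B₂ x hxB₂ hv'x
        have hcondwx : ({z | z ∈ ((wc.takeUntil v' hv's).concat hadjv'x).support} :
            Set V) ∩ B = {x} := by
          apply Set.Subset.antisymm
          · rintro z ⟨hz, hzB⟩
            simp only [Set.mem_setOf_eq, SimpleGraph.Walk.support_concat,
              List.concat_eq_append, List.mem_append, List.mem_singleton] at hz
            rcases hz with hz | rfl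
            · exact absurd hzB (htB z hz)
            · rfl
          · rintro z rfl
            exact ⟨SimpleGraph.Walk.end_mem_support _, hxB⟩
        exact hxc (gate_unique hB _ _ wc hrB le_rfl hcondwx hK1)
      · push_neg at hint
        have hcx : c ≠ x := fun h => hxc h.symm
        refine ⟨wc.concat (hBcomp c hcB x hxB hcx), ?_⟩
        apply Set.Subset.antisymm
        · rintro z ⟨hz, hzB₂⟩
          simp only [Set.mem_setOf_eq, SimpleGraph.Walk.support_concat,
            List.concat_eq_append, List.mem_append, List.mem_singleton] at hz
          rcases hz with hz | rfl
          · exact absurd hzB₂ (hint z hz)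
          · rfl
        · rintro z rfl
          exact ⟨SimpleGraph.Walk.end_mem_support _, hxB₂⟩
  obtain ⟨wx, hcondwx⟩ := hwx
  have hB₂ne : B₂.Nonempty := Set.nonempty_of_ncard_ne_zero (by have := hB₂.1.1; omega)
  obtain ⟨z, hzB₂, hzd⟩ : ∃ z ∈ B₂, G.dist r z = dmin B₂ := by
    obtain ⟨d, hd⟩ := Nat.sInf_mem (hB₂ne.image (G.dist r))
    exact ⟨d, hd.1, hd.2⟩
  have hzk : dmin B₂ ≤ k := hBmax B₂ hB₂
  obtain ⟨wz, hwzp, hwzl⟩ := hconn.exists_path_of_dist r z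
  obtain ⟨e, w', hconde, hsube⟩ := exists_first_entry wz hrB₂ hzB₂
  have hex : e = x := gate_unique hB₂ _ w' wx hrB₂ le_rfl hconde hcondwx
  have hxs : x ∈ wz.support := hsube x (hex ▸ w'.end_mem_support)
  have h5 : G.dist r x ≤ wz.length := by
    have := dist_take_of_shortest hconn wz hwzl hxs
    have := wz.length_takeUntil_le hxs
    omega
  have h6 : wz.length = G.dist r z := hwzl
  omega

end LeafBlock

section Transfer
variable {G : SimpleGraph V} {D : Set V}

/-- condition ensuring `D` behaves well for Δ-convexity -/
def GoodSet (G : SimpleGraph V) (D : Set V) : Prop :=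
  ∀ w, w ∉ D → ∀ u v, u ∈ D → v ∈ D → G.Adj u v → G.Adj w u → G.Adj w v → False

lemma GoodSet.convex (hD : GoodSet G D) : DeltaConvex G D := by
  intro u v w hu hv huv hwu hwv
  by_contra hw
  exact hD w hw u v hu hv huv hwu hwv

lemma hull_subset_good (hD : GoodSet G D) {T : Set V} (hT : T ⊆ D) : deltaHull G T ⊆ D :=
  hull_min hT hD.convex

lemma convex_image (hD : GoodSet G D) {C' : Set ↥D} (hC' : DeltaConvex (G.induce D) C') :
    DeltaConvex G (Subtype.val '' C') := by
  rintro u v w ⟨u', hu', rfl⟩ ⟨v', hv', rfl⟩ huv hwu hwv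
  by_cases hw : w ∈ D
  · have : (⟨w, hw⟩ : ↥D) ∈ C' := hC' hu' hv' huv hwu hwv
    exact ⟨⟨w, hw⟩, this, rfl⟩
  · exact absurd (hD w hw u'.1 v'.1 u'.2 v'.2 huv hwu hwv) not_false

lemma convex_preimage {C : Set V} (hC : DeltaConvex G C) :
    DeltaConvex (G.induce D) (Subtype.val ⁻¹' C) := by
  intro u v w hu hv huv hwu hwv
  exact hC hu hv huv hwu hwv

/-- hull transfer between `G` and the induced graph on a good set -/
lemma hull_image_eq (hD : GoodSet G D) {T : Set V} (hT : T ⊆ D) :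
    Subtype.val '' (deltaHull (G.induce D) (Subtype.val ⁻¹' T)) = deltaHull G T := by
  apply Set.Subset.antisymm
  · have h1 : deltaHull (G.induce D) (Subtype.val ⁻¹' T) ⊆ Subtype.val ⁻¹' (deltaHull G T) := by
      apply hull_min
      · intro t' ht'
        exact subset_hull T ht'
      · exact convex_preimage (hull_convex T)
    exact (Set.image_mono h1).trans (by
      rw [Set.image_preimage_eq_inter_range]
      exact Set.inter_subset_left)
  · apply hull_min
    · intro t ht
      exact ⟨⟨t, hT ht⟩, subset_hull _ (by simpa using ht), rfl⟩
    · exact convex_image hD (hull_convex _)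

lemma mem_hull_iff_good (hD : GoodSet G D) {T : Set V} (hT : T ⊆ D) {z : V} (hz : z ∈ D) :
    z ∈ deltaHull G T ↔ (⟨z, hz⟩ : ↥D) ∈ deltaHull (G.induce D) (Subtype.val ⁻¹' T) := by
  rw [← hull_image_eq hD hT]
  constructor
  · rintro ⟨z', hz', he⟩
    have hzz : z' = ⟨z, hz⟩ := Subtype.ext he
    exact hzz ▸ hz'
  · intro h
    exact ⟨_, h, rfl⟩

/-- Radon independence transfer -/
lemma radonIndep_transfer (hD : GoodSet G D) {T : Set V} (hT : T ⊆ D) :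
    RadonIndep G T ↔ RadonIndep (G.induce D) (Subtype.val ⁻¹' T) := by
  unfold RadonIndep
  apply not_congr
  constructor
  · rintro ⟨S₁, S₂, hun, hdis, hne₁, hne₂, z, hz₁, hz₂⟩
    have hS₁ : S₁ ⊆ D := (Set.subset_union_left.trans hun.subset).trans hT
    have hS₂ : S₂ ⊆ D := (Set.subset_union_right.trans hun.subset).trans hT
    have hzD : z ∈ D := hull_subset_good hD hS₁ hz₁
    refine ⟨Subtype.val ⁻¹' S₁, Subtype.val ⁻¹' S₂, ?_, ?_, ?_, ?_, ⟨z, hzD⟩, ?_, ?_⟩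
    · rw [← Set.preimage_union, hun]
    · exact Disjoint.preimage _ hdis
    · obtain ⟨s, hs⟩ := hne₁; exact ⟨⟨s, hS₁ hs⟩, hs⟩
    · obtain ⟨s, hs⟩ := hne₂; exact ⟨⟨s, hS₂ hs⟩, hs⟩
    · exact (mem_hull_iff_good hD hS₁ hzD).mp hz₁
    · exact (mem_hull_iff_good hD hS₂ hzD).mp hz₂
  · rintro ⟨S₁', S₂', hun, hdis, hne₁, hne₂, z', hz₁, hz₂⟩
    have hrange : T ⊆ Set.range (Subtype.val : ↥D → V) := by
      rw [Subtype.range_coe]; exact hT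
    refine ⟨Subtype.val '' S₁', Subtype.val '' S₂', ?_, ?_, hne₁.image _, hne₂.image _,
      z'.1, ?_, ?_⟩
    · rw [← Set.image_union, hun, Set.image_preimage_eq_of_subset hrange]
    · exact (Set.disjoint_image_iff Subtype.val_injective).mpr hdis
    · have hS₁D : Subtype.val '' S₁' ⊆ D := by rintro x ⟨x', _, rfl⟩; exact x'.2
      rw [mem_hull_iff_good hD hS₁D z'.2]
      rw [Set.preimage_image_eq _ Subtype.val_injective]
      exact hz₁
    · have hS₂D : Subtype.val '' S₂' ⊆ D := by rintro x ⟨x', _, rfl⟩; exact x'.2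
      rw [mem_hull_iff_good hD hS₂D z'.2]
      rw [Set.preimage_image_eq _ Subtype.val_injective]
      exact hz₂

end Transfer

section Transfer2
variable {G : SimpleGraph V} {D : Set V}

lemma rtg_subtype {S : Set V} (hSD : S ⊆ D) {x y : V}
    (h : Relation.ReflTransGen (Rel G S) x y) :
    ∀ (x' y' : ↥D), x'.1 = x → y'.1 = y → x ∈ S →
      Relation.ReflTransGen (Rel (G.induce D) (Subtype.val ⁻¹' S)) x' y' := by
  induction h with
  | refl =>
    intro x' y' hx' hy' hxS
    have : x' = y' := Subtype.ext (hx'.trans hy'.symm)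
    rw [this]
  | @tail b c hxb hbc ih =>
    intro x' y' hx' hy' hxS
    have hbS : b ∈ S := hbc.2.1
    have hbD : b ∈ D := hSD hbS
    refine Relation.ReflTransGen.tail (ih x' ⟨b, hbD⟩ hx' rfl hxS) ?_
    refine ⟨?_, hbS, ?_⟩
    · show G.Adj b y'.1
      rw [hy']
      exact hbc.1
    · show y'.1 ∈ S
      rw [hy']
      exact hbc.2.2

lemma connOn_preimage_iff {S : Set V} (hSD : S ⊆ D) :
    ConnOn (G.induce D) (Subtype.val ⁻¹' S) ↔ ConnOn G S := by
  constructor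
  · rintro ⟨⟨x', hx'⟩, h⟩
    refine ⟨⟨x'.1, hx'⟩, fun a ha b hb => ?_⟩
    have := h ⟨a, hSD ha⟩ ha ⟨b, hSD hb⟩ hb
    exact Relation.ReflTransGen.lift Subtype.val
      (fun p q hpq => ⟨hpq.1, hpq.2.1, hpq.2.2⟩) _ _ this
  · rintro ⟨⟨x, hx⟩, h⟩
    refine ⟨⟨⟨x, hSD hx⟩, hx⟩, fun a ha b hb => ?_⟩
    exact rtg_subtype hSD (h a.1 ha b.1 hb) a b rfl rfl ha

lemma noCutSet_preimage_iff {S : Set V} (hSD : S ⊆ D) :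
    NoCutSet (G.induce D) (Subtype.val ⁻¹' S) ↔ NoCutSet G S := by
  have hrange : S ⊆ Set.range (Subtype.val : ↥D → V) := by
    rw [Subtype.range_coe]; exact hSD
  have hncard : (Subtype.val ⁻¹' S : Set ↥D).ncard = S.ncard := by
    rw [← Set.ncard_image_of_injective _ Subtype.val_injective,
      Set.image_preimage_eq_of_subset hrange]
  constructor
  · rintro ⟨h1, h2, h3⟩
    refine ⟨hncard ▸ h1, induce_connected_iff.mpr
      ((connOn_preimage_iff hSD).mp (induce_connected_iff.mp h2)), fun v hv => ?_⟩
    have hv' := h3 ⟨v, hSD hv⟩ hv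
    have hset : (Subtype.val ⁻¹' S : Set ↥D) \ {⟨v, hSD hv⟩}
        = Subtype.val ⁻¹' (S \ {v}) := by
      ext a
      simp only [Set.mem_diff, Set.mem_preimage, Set.mem_singleton_iff]
      exact and_congr Iff.rfl (not_congr ⟨fun h => by rw [h], fun h => Subtype.ext h⟩)
    rw [hset] at hv'
    exact induce_connected_iff.mpr ((connOn_preimage_iff
      (Set.diff_subset.trans hSD)).mp (induce_connected_iff.mp hv'))
  · rintro ⟨h1, h2, h3⟩
    refine ⟨hncard ▸ h1, induce_connected_iff.mpr
      ((connOn_preimage_iff hSD).mpr (induce_connected_iff.mp h2)), ?_⟩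
    rintro ⟨v, hvD⟩ hv
    have hv' := h3 v hv
    have hset : (Subtype.val ⁻¹' S : Set ↥D) \ {⟨v, hvD⟩}
        = Subtype.val ⁻¹' (S \ {v}) := by
      ext a
      simp only [Set.mem_diff, Set.mem_preimage, Set.mem_singleton_iff]
      exact and_congr Iff.rfl (not_congr ⟨fun h => by rw [h], fun h => Subtype.ext h⟩)
    rw [hset]
    exact induce_connected_iff.mpr ((connOn_preimage_iff
      (Set.diff_subset.trans hSD)).mpr (induce_connected_iff.mp hv'))

end Transfer2

section LeafCorr
variable {G : SimpleGraph V} [Fintype V] {B : Set V} {c : V}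

lemma exists_adj_mem {C : Set V} (hC : NoCutSet G C) {x : V} (hx : x ∈ C) :
    ∃ y ∈ C, G.Adj x y := by
  obtain ⟨y, hyC, hyx⟩ := Set.exists_ne_of_one_lt_ncard (s := C) (by have := hC.1; omega) x
  rcases (noCutSet_connOn hC).2 x hx y hyC |>.cases_head with h | ⟨z, hz, _⟩
  · exact absurd h.symm hyx
  · exact ⟨z, hz.2.2, hz.1⟩

lemma inter_D_eq (hcB : c ∈ B) : B ∩ (B \ {c})ᶜ = {c} := by
  ext x
  simp only [Set.mem_inter_iff, Set.mem_compl_iff, Set.mem_diff, Set.mem_singleton_iff]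
  constructor
  · rintro ⟨hxB, h⟩
    by_contra hxc
    exact h ⟨hxB, hxc⟩
  · rintro rfl
    exact ⟨hcB, fun h => h.2 rfl⟩

lemma goodSet_D (hcB : c ∈ B)
    (hint : ∀ x ∈ B \ {c}, ∀ y, G.Adj x y → y ∈ B) : GoodSet G (B \ {c})ᶜ := by
  intro w hw u v hu hv huv hwu hwv
  rw [Set.notMem_compl_iff] at hw
  have huB : u ∈ B := hint w hw u hwu
  have hvB : v ∈ B := hint w hw v hwv
  have hu' : u ∈ ({c} : Set V) := inter_D_eq hcB ▸ ⟨huB, hu⟩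
  have hv' : v ∈ ({c} : Set V) := inter_D_eq hcB ▸ ⟨hvB, hv⟩
  rw [hu', hv'] at huv
  exact huv.ne rfl

lemma block_subset_D (hB : IsBlock G B)
    (hint : ∀ x ∈ B \ {c}, ∀ y, G.Adj x y → y ∈ B)
    {C : Set V} (hC : IsBlock G C) (hne : C ≠ B) : C ⊆ (B \ {c})ᶜ := by
  intro x hxC
  by_contra hxA
  rw [Set.notMem_compl_iff] at hxA
  obtain ⟨y, hyC, hxy⟩ := exists_adj_mem hC.1 hxC
  have hyB : y ∈ B := hint x hxA y hxy
  exact hne (block_eq_of_two_mem hC hB hxC hxA.1 hyC hyB hxy.ne)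

lemma isBlock_preimage (hB : IsBlock G B)
    (hint : ∀ x ∈ B \ {c}, ∀ y, G.Adj x y → y ∈ B)
    {C : Set V} (hC : IsBlock G C) (hne : C ≠ B) :
    IsBlock (G.induce (B \ {c})ᶜ) (Subtype.val ⁻¹' C) := by
  have hCD := block_subset_D hB hint hC hne
  refine ⟨(noCutSet_preimage_iff hCD).mpr hC.1, ?_⟩
  intro C'' hC'' hsub
  have hpre : Subtype.val ⁻¹' (Subtype.val '' C'') = C'' :=
    Set.preimage_image_eq _ Subtype.val_injective
  have hC₂D : Subtype.val '' C'' ⊆ (B \ {c})ᶜ := by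
    rintro z ⟨z', _, rfl⟩; exact z'.2
  have hC₂ : NoCutSet G (Subtype.val '' C'') :=
    (noCutSet_preimage_iff hC₂D).mp (by rw [hpre]; exact hC'')
  have hCC₂ : C ⊆ Subtype.val '' C'' := by
    intro z hz
    exact ⟨⟨z, hCD hz⟩, hsub hz, rfl⟩
  have := hC.2 _ hC₂ hCC₂
  rw [this, hpre]

lemma isBlock_image (hB : IsBlock G B) (hcB : c ∈ B)
    (hint : ∀ x ∈ B \ {c}, ∀ y, G.Adj x y → y ∈ B)
    {C' : Set ↥(B \ {c})ᶜ} (hC' : IsBlock (G.induce (B \ {c})ᶜ) C') :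
    ∃ C, IsBlock G C ∧ C ≠ B ∧ Subtype.val ⁻¹' C = C' := by
  have hpre : Subtype.val ⁻¹' (Subtype.val '' C') = C' :=
    Set.preimage_image_eq _ Subtype.val_injective
  have hC₀D : Subtype.val '' C' ⊆ (B \ {c})ᶜ := by
    rintro z ⟨z', _, rfl⟩; exact z'.2
  have hC₀ : NoCutSet G (Subtype.val '' C') :=
    (noCutSet_preimage_iff hC₀D).mp (by rw [hpre]; exact hC'.1)
  obtain ⟨C, hCblock, hsub⟩ := exists_block_superset hC₀
  have hne : C ≠ B := by
    rintro rfl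
    have h1 : Subtype.val '' C' ⊆ ({c} : Set V) := by
      intro z hz
      exact inter_D_eq hcB ▸ ⟨hsub hz, hC₀D hz⟩
    have h2 : (Subtype.val '' C').ncard ≤ 1 := by
      have := Set.ncard_le_ncard h1 (Set.toFinite _)
      simpa using this
    have := hC₀.1
    omega
  have hCD := block_subset_D hB hint hCblock hne
  have hCsub : C' ⊆ Subtype.val ⁻¹' C := by
    intro z hz
    exact hsub ⟨z, hz, rfl⟩
  have := hC'.2 _ (isBlock_preimage hB hint hCblock hne).1 hCsub
  exact ⟨C, hCblock, hne, this.symm⟩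

lemma blocks_count (hB : IsBlock G B) (hcB : c ∈ B)
    (hint : ∀ x ∈ B \ {c}, ∀ y, G.Adj x y → y ∈ B) :
    {C' : Set ↥(B \ {c})ᶜ | IsBlock (G.induce (B \ {c})ᶜ) C'}.ncard + 1
      = {C : Set V | IsBlock G C}.ncard := by
  have hset : {C' : Set ↥(B \ {c})ᶜ | IsBlock (G.induce (B \ {c})ᶜ) C'}
      = (fun C => Subtype.val ⁻¹' C) '' ({C : Set V | IsBlock G C} \ {B}) := by
    apply Set.Subset.antisymm
    · intro C' hC'
      obtain ⟨C, h1, h2, h3⟩ := isBlock_image hB hcB hint hC'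
      exact ⟨C, ⟨h1, h2⟩, h3⟩
    · rintro C' ⟨C, ⟨h1, h2⟩, rfl⟩
      exact isBlock_preimage hB hint h1 h2
  rw [hset]
  have hinj : Set.InjOn (fun C : Set V => (Subtype.val ⁻¹' C : Set ↥(B \ {c})ᶜ))
      ({C : Set V | IsBlock G C} \ {B}) := by
    intro C₁ h₁ C₂ h₂ he
    have hd₁ : C₁ ⊆ (B \ {c})ᶜ := block_subset_D hB hint h₁.1 h₁.2
    have hd₂ : C₂ ⊆ (B \ {c})ᶜ := block_subset_D hB hint h₂.1 h₂.2
    have r₁ : C₁ ⊆ Set.range (Subtype.val : ↥(B \ {c})ᶜ → V) := by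
      rw [Subtype.range_coe]; exact hd₁
    have r₂ : C₂ ⊆ Set.range (Subtype.val : ↥(B \ {c})ᶜ → V) := by
      rw [Subtype.range_coe]; exact hd₂
    calc C₁ = Subtype.val '' (Subtype.val ⁻¹' C₁) := (Set.image_preimage_eq_of_subset r₁).symm
    _ = Subtype.val '' (Subtype.val ⁻¹' C₂) := by
        have he' : (Subtype.val ⁻¹' C₁ : Set ↥(B \ {c})ᶜ) = Subtype.val ⁻¹' C₂ := he
        rw [he']
    _ = C₂ := Set.image_preimage_eq_of_subset r₂
  rw [Set.ncard_image_of_injOn hinj,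
    Set.ncard_diff_singleton_of_mem (show B ∈ {C : Set V | IsBlock G C} from hB)]
  have hpos : 1 ≤ {C : Set V | IsBlock G C}.ncard := by
    rw [Nat.one_le_iff_ne_zero]
    intro h
    have := Set.ncard_eq_zero (Set.toFinite {C : Set V | IsBlock G C}) |>.mp h
    rw [Set.eq_empty_iff_forall_notMem] at this
    exact this B hB
  omega

end LeafCorr

section Prep
variable {G : SimpleGraph V}

lemma exists_adj [Fintype V] (hconn : G.Connected) (h2 : 1 < Fintype.card V) :
    ∃ u v : V, G.Adj u v := by
  obtain ⟨u, v, hne⟩ := Fintype.exists_pair_of_one_lt_card h2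
  rcases ((SimpleGraph.reachable_iff_reflTransGen u v).mp (hconn.preconnected u v)).cases_head
    with h | ⟨z, huz, _⟩
  · exact absurd h hne
  · exact ⟨u, z, huz⟩

lemma radonIndep_singleton (v : V) : RadonIndep G {v} := by
  rintro ⟨S₁, S₂, hun, hdis, ⟨a, ha⟩, ⟨b, hb⟩, _⟩
  have ha' : a = v := by
    have : a ∈ S₁ ∪ S₂ := Set.mem_union_left S₂ ha
    rw [hun] at this
    exact this
  have hb' : b = v := by
    have : b ∈ S₁ ∪ S₂ := Set.mem_union_right S₁ hb
    rw [hun] at this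
    exact this
  exact Set.disjoint_left.mp hdis ha (ha'.trans hb'.symm ▸ hb)

lemma connOn_D [DecidableEq V] (hconn : G.Connected) {B : Set V} {c : V}
    (hcomp : CompleteOn G B) (hcB : c ∈ B)
    (hint : ∀ x ∈ B \ {c}, ∀ y, G.Adj x y → y ∈ B) : ConnOn G (B \ {c})ᶜ := by
  have hcD : c ∈ (B \ {c})ᶜ := fun h => h.2 rfl
  have key : ∀ x ∈ (B \ {c})ᶜ, Relation.ReflTransGen (Rel G (B \ {c})ᶜ) c x := by
    intro x hx
    obtain ⟨w, hwp, hwl⟩ := hconn.exists_path_of_dist c x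
    apply rtg_of_walk_subset w
    intro z hz
    by_contra hzD
    rw [Set.notMem_compl_iff] at hzD
    have hzc : z ≠ c := hzD.2
    have hzx : z ≠ x := by
      rintro rfl
      exact hx hzD
    have htake : (w.takeUntil z hz).length ≠ 0 :=
      fun h => hzc (SimpleGraph.Walk.eq_of_length_eq_zero h).symm
    have hlen : (w.takeUntil z hz).length + (w.dropUntil z hz).length = w.length := by
      have := congrArg SimpleGraph.Walk.length (w.take_spec hz)
      rwa [SimpleGraph.Walk.length_append] at this
    rcases hd : w.dropUntil z hz with _ | ⟨hadj, q⟩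
    · exact absurd rfl hzx
    · rename_i s
      have hsB : s ∈ B := hint z hzD s hadj
      have hdl : (w.dropUntil z hz).length = q.length + 1 := by
        rw [hd, SimpleGraph.Walk.length_cons]
      rcases eq_or_ne s c with rfl | hsc
      · have := SimpleGraph.dist_le q
        omega
      · have hcs : G.Adj c s := hcomp c hcB s hsB (fun h => hsc h.symm)
        have := SimpleGraph.dist_le (SimpleGraph.Walk.cons hcs q)
        rw [SimpleGraph.Walk.length_cons] at this
        omega
  exact ⟨⟨c, hcD⟩, fun x hx y hy => (rtg_symm (key x hx)).trans (key y hy)⟩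

end Prep

universe u

section Master

lemma master : ∀ (n : ℕ) (V : Type u) [Fintype V] (G : SimpleGraph V), G.Connected →
    (∀ B : Set V, IsBlock G B → CompleteOn G B) → Fintype.card V ≤ n →
    (∀ S : Set V, RadonIndep G S → S.ncard ≤ {C : Set V | IsBlock G C}.ncard + 1) ∧
    (∃ S : Set V, RadonIndep G S ∧ S.ncard = {C : Set V | IsBlock G C}.ncard + 1) := by
  intro n
  induction n with
  | zero =>
    intro V _ G hconn _ hcard
    obtain ⟨v⟩ := hconn.nonempty
    have : 0 < Fintype.card V := Fintype.card_pos_iff.mpr ⟨v⟩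
    omega
  | succ n ih =>
    intro V _ G hconn hbg hcard
    classical
    by_cases hone : Fintype.card V ≤ 1
    · -- base case : a single vertex
      obtain ⟨v⟩ := hconn.nonempty
      have hcard1 : Fintype.card V = 1 :=
        le_antisymm hone (Fintype.card_pos_iff.mpr ⟨v⟩)
      have hsmall : ∀ S : Set V, S.ncard ≤ 1 := by
        intro S
        have := Set.ncard_le_ncard (Set.subset_univ S) Set.finite_univ
        rwa [Set.ncard_univ, Nat.card_eq_fintype_card, hcard1] at this
      have hnoblocks : {C : Set V | IsBlock G C} = ∅ := by
        rw [Set.eq_empty_iff_forall_notMem]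
        intro C hC
        have h2 := hC.1.1
        have := hsmall C
        omega
      constructor
      · intro S _
        have := hsmall S
        omega
      · refine ⟨{v}, radonIndep_singleton v, ?_⟩
        rw [hnoblocks, Set.ncard_singleton, Set.ncard_empty]
    · push_neg at hone
      obtain ⟨u₀, v₀, hadj₀⟩ := exists_adj hconn hone
      obtain ⟨B₀, hB₀, -, -⟩ := exists_block_of_adj hadj₀
      obtain ⟨B, c, hB, hcB, hint⟩ := exists_leaf_block hconn hbg hB₀
      set D : Set V := (B \ {c})ᶜ with hDdef
      have hBcomp : CompleteOn G B := hbg B hB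
      have hcD : c ∈ D := fun h => h.2 rfl
      have hgood : GoodSet G D := goodSet_D hcB hint
      obtain ⟨a, haB, hac⟩ :=
        Set.exists_ne_of_one_lt_ncard (s := B) (by have := hB.1.1; omega) c
      have haA : a ∈ B \ {c} := ⟨haB, hac⟩
      have haD : a ∉ D := fun h => h haA
      have hconn' : (G.induce D).Connected :=
        induce_connected_iff.mpr (connOn_D hconn hBcomp hcB hint)
      have hbg' : ∀ C' : Set ↥D, IsBlock (G.induce D) C' → CompleteOn (G.induce D) C' := by
        intro C' hC'
        obtain ⟨C, hC, hne, hpre⟩ := isBlock_image hB hcB hint hC'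
        intro x hx y hy hxy
        rw [← hpre] at hx hy
        exact hbg C hC x.1 hx y.1 hy (fun h => hxy (Subtype.ext h))
      have hcount := blocks_count hB hcB hint
      have hcard' : Fintype.card ↥D ≤ n := by
        have h1 : Fintype.card ↥D = D.ncard := by
          rw [← Nat.card_coe_set_eq, Nat.card_eq_fintype_card]
        have h2 : D.ncard < Fintype.card V := by
          have hss : D ⊂ Set.univ := by
            refine ⟨Set.subset_univ D, fun h => haD (h (Set.mem_univ a))⟩
          have := Set.ncard_lt_ncard hss Set.finite_univ
          rwa [Set.ncard_univ, Nat.card_eq_fintype_card] at this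
        omega
      obtain ⟨ihU, ihL⟩ := ih ↥D (G.induce D) hconn' hbg' hcard'
      set ℓ' := {C' : Set ↥D | IsBlock (G.induce D) C'}.ncard with hℓ'
      have hnc : ∀ T : Set V, T ⊆ D → (Subtype.val ⁻¹' T : Set ↥D).ncard = T.ncard := by
        intro T hTD
        rw [← Set.ncard_image_of_injective _ Subtype.val_injective,
          Set.image_preimage_eq_of_subset (by rw [Subtype.range_coe]; exact hTD)]
      have depOf : ∀ T : Set V, T ⊆ D → ℓ' + 2 ≤ T.ncard →
          ∃ P₁ P₂ : Set V, P₁ ∪ P₂ = T ∧ Disjoint P₁ P₂ ∧ P₁.Nonempty ∧ P₂.Nonempty ∧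
            (deltaHull G P₁ ∩ deltaHull G P₂).Nonempty := by
        intro T hTD hTcard
        by_contra hdep
        have h1 : RadonIndep G T := hdep
        have h2 := (radonIndep_transfer hgood hTD).mp h1
        have h3 := ihU _ h2
        rw [hnc T hTD] at h3
        omega
      have hullB : ∀ (S₀ : Set V) {x y : V}, x ∈ S₀ → y ∈ S₀ → x ≠ y → x ∈ B → y ∈ B →
          B ⊆ deltaHull G S₀ := by
        intro S₀ x y hx hy hxy hxB hyB
        exact block_subset_convex hB hBcomp (hull_convex S₀) hxB hyB hxy
          (subset_hull S₀ hx) (subset_hull S₀ hy)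
      constructor
      · -- upper bound
        intro S hSindep
        by_contra hbig
        push_neg at hbig
        have hS3 : ℓ' + 3 ≤ S.ncard := by omega
        by_cases hcase1 : 3 ≤ (S ∩ B).ncard
        · obtain ⟨x, hx⟩ : (S ∩ B).Nonempty := Set.nonempty_of_ncard_ne_zero (by omega)
          obtain ⟨y, hy, hyx⟩ := Set.exists_ne_of_one_lt_ncard (s := S ∩ B) (by omega) x
          have hpairsub : ({x, y} : Set V) ⊆ S ∩ B := by
            rintro t (rfl | rfl)
            · exact hx
            · exact hy
          have hdiff : 1 ≤ ((S ∩ B) \ {x, y}).ncard := by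
            rw [Set.ncard_diff hpairsub (Set.toFinite _), Set.ncard_pair (Ne.symm hyx)]
            omega
          obtain ⟨z, hz⟩ : ((S ∩ B) \ {x, y}).Nonempty :=
            Set.nonempty_of_ncard_ne_zero (by omega)
          have hxyS : ({x, y} : Set V) ⊆ S := hpairsub.trans Set.inter_subset_left
          apply hSindep
          refine ⟨{x, y}, S \ {x, y}, Set.union_diff_cancel hxyS,
            Set.disjoint_sdiff_right, ⟨x, Or.inl rfl⟩, ⟨z, hz.1.1, hz.2⟩, z, ?_, ?_⟩
          · exact hullB {x, y} (Or.inl rfl) (Or.inr rfl) (Ne.symm hyx) hx.2 hy.2 hz.1.2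
          · exact subset_hull _ ⟨hz.1.1, hz.2⟩
        · have hSA2 : (S ∩ (B \ {c})).ncard ≤ 2 := by
            have hsub : S ∩ (B \ {c}) ⊆ S ∩ B :=
              Set.inter_subset_inter_right S Set.diff_subset
            have := Set.ncard_le_ncard hsub (Set.toFinite _)
            omega
          by_cases hc2 : (S ∩ (B \ {c})).ncard = 2
          · obtain ⟨a₁, b₁, hab, habs⟩ := Set.ncard_eq_two.mp hc2
            have ha₁ : a₁ ∈ S ∩ (B \ {c}) := by rw [habs]; exact Or.inl rfl
            have hb₁ : b₁ ∈ S ∩ (B \ {c}) := by rw [habs]; exact Or.inr rfl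
            have hcS : c ∉ S := by
              intro hcS
              apply hcase1
              have hsub : ({a₁, b₁, c} : Set V) ⊆ S ∩ B := by
                rintro t (rfl | rfl | rfl)
                · exact ⟨ha₁.1, ha₁.2.1⟩
                · exact ⟨hb₁.1, hb₁.2.1⟩
                · exact ⟨hcS, hcB⟩
              have h3 : ({a₁, b₁, c} : Set V).ncard = 3 :=
                Set.ncard_eq_three.mpr ⟨a₁, b₁, c, hab, ha₁.2.2, hb₁.2.2, rfl⟩
              rw [← h3]
              exact Set.ncard_le_ncard hsub (Set.toFinite _)
            set T' : Set V := S \ {a₁, b₁} with hT'def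
            have hT'D : T' ⊆ D := by
              intro t ht
              by_contra htD
              rw [Set.notMem_compl_iff] at htD
              have : t ∈ S ∩ (B \ {c}) := ⟨ht.1, htD⟩
              rw [habs] at this
              exact ht.2 this
            have hcT' : c ∉ T' := fun h => hcS h.1
            have hpairS : ({a₁, b₁} : Set V) ⊆ S := by
              rintro t (rfl | rfl)
              · exact ha₁.1
              · exact hb₁.1
            have hT'card : T'.ncard = S.ncard - 2 := by
              rw [hT'def, Set.ncard_diff hpairS (Set.toFinite _), Set.ncard_pair hab]
            have hR''D : insert c T' ⊆ D := Set.insert_subset hcD hT'D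
            have hR''card : (insert c T').ncard = T'.ncard + 1 :=
              Set.ncard_insert_of_notMem hcT' (Set.toFinite _)
            obtain ⟨P₁, P₂, hun, hdis, hne₁, hne₂, z, hz₁, hz₂⟩ :=
              depOf (insert c T') hR''D (by omega)
            have main2 : ∀ P₁ P₂ : Set V, P₁ ∪ P₂ = insert c T' → Disjoint P₁ P₂ →
                P₁.Nonempty → P₂.Nonempty → ∀ z, z ∈ deltaHull G P₁ → z ∈ deltaHull G P₂ →
                c ∈ P₁ → False := by
              intro P₁ P₂ hun hdis hne₁ hne₂ z hz₁ hz₂ hcP₁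
              have hcP₂ : c ∉ P₂ := Set.disjoint_left.mp hdis hcP₁
              apply hSindep
              have hBsub : B ⊆ deltaHull G ((P₁ \ {c}) ∪ {a₁, b₁}) :=
                hullB _ (Or.inr (Or.inl rfl)) (Or.inr (Or.inr rfl)) hab ha₁.2.1 hb₁.2.1
              refine ⟨(P₁ \ {c}) ∪ {a₁, b₁}, P₂, ?_, ?_, ⟨a₁, Or.inr (Or.inl rfl)⟩,
                hne₂, z, ?_, hz₂⟩
              · ext t
                simp only [Set.mem_union, Set.mem_diff, Set.mem_singleton_iff,
                  Set.mem_insert_iff]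
                constructor
                · rintro ((⟨ht, htc⟩ | ht) | ht)
                  · have : t ∈ P₁ ∪ P₂ := Or.inl ht
                    rw [hun] at this
                    rcases this with rfl | h
                    · exact absurd rfl htc
                    · exact h.1
                  · rcases ht with rfl | rfl
                    · exact ha₁.1
                    · exact hb₁.1
                  · have : t ∈ P₁ ∪ P₂ := Or.inr ht
                    rw [hun] at this
                    rcases this with rfl | h
                    · exact absurd ht hcP₂
                    · exact h.1
                · intro htS
                  by_cases htab : t = a₁ ∨ t = b₁
                  · exact Or.inl (Or.inr htab)
                  · push_neg at htab
                    have htT' : t ∈ T' := ⟨htS, fun h => by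
                      rcases h with rfl | rfl
                      · exact htab.1 rfl
                      · exact htab.2 rfl⟩
                    have : t ∈ P₁ ∪ P₂ := by rw [hun]; exact Or.inr htT'
                    rcases this with h | h
                    · have htc : t ≠ c := fun he => hcS (he ▸ htS)
                      exact Or.inl (Or.inl ⟨h, htc⟩)
                    · exact Or.inr h
              · refine Disjoint.union_left (hdis.mono_left Set.diff_subset) ?_
                rw [Set.disjoint_left]
                rintro t (rfl | rfl) htP₂
                · exact (fun h => h ⟨ha₁.2.1, ha₁.2.2⟩ : t ∉ D) (hR''D (hun ▸ Or.inr htP₂))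
                · exact (fun h => h ⟨hb₁.2.1, hb₁.2.2⟩ : t ∉ D) (hR''D (hun ▸ Or.inr htP₂))
              · have hP₁sub : P₁ ⊆ deltaHull G ((P₁ \ {c}) ∪ {a₁, b₁}) := by
                  intro t ht
                  rcases eq_or_ne t c with rfl | htc
                  · exact hBsub hcB
                  · exact subset_hull _ (Or.inl ⟨ht, htc⟩)
                exact hull_min hP₁sub (hull_convex _) hz₁
            have hcmem : c ∈ P₁ ∪ P₂ := by rw [hun]; exact Or.inl rfl
            rcases hcmem with h | h
            · exact main2 P₁ P₂ hun hdis hne₁ hne₂ z hz₁ hz₂ h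
            · exact main2 P₂ P₁ (by rw [Set.union_comm]; exact hun) hdis.symm hne₂ hne₁
                z hz₂ hz₁ h
          · by_cases hc1 : (S ∩ (B \ {c})).ncard = 1
            · obtain ⟨a₁, ha₁eq⟩ := Set.ncard_eq_one.mp hc1
              have ha₁ : a₁ ∈ S ∩ (B \ {c}) := by rw [ha₁eq]; rfl
              set T' : Set V := S \ {a₁} with hT'def
              have hT'D : T' ⊆ D := by
                intro t ht
                by_contra htD
                rw [Set.notMem_compl_iff] at htD
                have : t ∈ S ∩ (B \ {c}) := ⟨ht.1, htD⟩
                rw [ha₁eq] at this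
                exact ht.2 this
              have hT'card : T'.ncard = S.ncard - 1 := by
                rw [hT'def, Set.ncard_diff_singleton_of_mem ha₁.1]
              obtain ⟨P₁, P₂, hun, hdis, hne₁, hne₂, z, hz₁, hz₂⟩ :=
                depOf T' hT'D (by omega)
              apply hSindep
              have ha₁P₂ : a₁ ∉ P₂ := fun h =>
                (fun hh => hh ⟨ha₁.2.1, ha₁.2.2⟩ : a₁ ∉ D) (hT'D (hun ▸ Or.inr h))
              refine ⟨insert a₁ P₁, P₂, ?_, ?_, ⟨a₁, Or.inl rfl⟩, hne₂, z, ?_, hz₂⟩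
              · rw [Set.insert_union, hun, hT'def, Set.insert_diff_singleton,
                  Set.insert_eq_self.mpr ha₁.1]
              · rw [Set.disjoint_left]
                rintro t (rfl | htP₁) htP₂
                · exact ha₁P₂ htP₂
                · exact Set.disjoint_left.mp hdis htP₁ htP₂
              · exact hull_mono (Set.subset_insert a₁ P₁) hz₁
            · have hc0 : (S ∩ (B \ {c})).ncard = 0 := by omega
              have hSD : S ⊆ D := by
                intro t ht
                by_contra htD
                rw [Set.notMem_compl_iff] at htD
                have h1 : t ∈ S ∩ (B \ {c}) := ⟨ht, htD⟩
                have := Set.ncard_eq_zero (Set.toFinite _) |>.mp hc0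
                rw [this] at h1
                exact h1
              obtain ⟨P₁, P₂, hun, hdis, hne₁, hne₂, hz⟩ := depOf S hSD (by omega)
              exact hSindep ⟨P₁, P₂, hun, hdis, hne₁, hne₂, hz⟩
      · -- lower bound: a Radon independent set of size ℓ + 1
        obtain ⟨S', hS'indep, hS'card⟩ := ihL
        set T : Set V := Subtype.val '' S' with hTdef
        have hTD : T ⊆ D := by rintro t ⟨t', _, rfl⟩; exact t'.2
        have hTpre : Subtype.val ⁻¹' T = S' := Set.preimage_image_eq _ Subtype.val_injective
        have hTindep : RadonIndep G T :=
          (radonIndep_transfer hgood hTD).mpr (by rw [hTpre]; exact hS'indep)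
        have hTcard : T.ncard = ℓ' + 1 := by
          rw [hTdef, Set.ncard_image_of_injective _ Subtype.val_injective]
          exact hS'card
        have haT : a ∉ T := fun h => haD (hTD h)
        refine ⟨insert a T, ?_, ?_⟩
        · have main : ∀ S₁ S₂ : Set V, S₁ ∪ S₂ = insert a T → Disjoint S₁ S₂ →
              S₁.Nonempty → S₂.Nonempty → ∀ z, z ∈ deltaHull G S₁ → z ∈ deltaHull G S₂ →
              a ∈ S₁ → False := by
            intro S₁ S₂ hun hdis hne₁ hne₂ z hz₁ hz₂ haS₁
            have haS₂ : a ∉ S₂ := Set.disjoint_left.mp hdis haS₁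
            set T₁ : Set V := S₁ \ {a} with hT₁def
            have hT₁T : T₁ ⊆ T := by
              rintro t ⟨ht, hta⟩
              have h1 : t ∈ insert a T := by rw [← hun]; exact Or.inl ht
              rcases h1 with rfl | h
              · exact absurd rfl hta
              · exact h
            have hT₂T : S₂ ⊆ T := by
              intro t ht
              have h1 : t ∈ insert a T := by rw [← hun]; exact Or.inr ht
              rcases h1 with rfl | h
              · exact absurd ht haS₂
              · exact h
            have hT₁D : T₁ ⊆ D := hT₁T.trans hTD
            have hT₂D : S₂ ⊆ D := hT₂T.trans hTD
            have hT₁₂ : T₁ ∪ S₂ = T := by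
              apply Set.Subset.antisymm (Set.union_subset hT₁T hT₂T)
              intro t ht
              have h1 : t ∈ S₁ ∪ S₂ := by rw [hun]; exact Or.inr ht
              rcases h1 with h | h
              · exact Or.inl ⟨h, fun he => haT (by rw [← he]; exact ht)⟩
              · exact Or.inr h
            have hHD : deltaHull G T₁ ⊆ D := hull_subset_good hgood hT₁D
            have hH₂D : deltaHull G S₂ ⊆ D := hull_subset_good hgood hT₂D
            have final : ∀ z', z' ∈ deltaHull G T₁ → z' ∈ deltaHull G S₂ → False := by
              intro z' h1 h2
              have hT₁ne : T₁.Nonempty := by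
                rw [Set.nonempty_iff_ne_empty]
                intro he
                rw [he, hull_empty] at h1
                exact h1
              exact hTindep ⟨T₁, S₂, hT₁₂, hdis.mono_left Set.diff_subset, hT₁ne, hne₂,
                z', h1, h2⟩
            by_cases hcH : c ∈ deltaHull G T₁
            · have hWconv : DeltaConvex G (deltaHull G T₁ ∪ B) := by
                intro u v w hu hv huv hwu hwv
                by_cases hu' : u ∈ deltaHull G T₁
                · by_cases hv' : v ∈ deltaHull G T₁
                  · by_cases hwD : w ∈ D
                    · exact Or.inl (hull_convex T₁ hu' hv' huv hwu hwv)
                    · exact (hgood w hwD u v (hHD hu') (hHD hv') huv hwu hwv).elim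
                  · have hvB : v ∈ B := ((Set.mem_union _ _ _).mp hv).resolve_left hv'
                    have hvc : v ≠ c := fun h => hv' (by rw [h]; exact hcH)
                    exact Or.inr (hint v ⟨hvB, hvc⟩ w hwv.symm)
                · have huB : u ∈ B := ((Set.mem_union _ _ _).mp hu).resolve_left hu'
                  have huc : u ≠ c := fun h => hu' (by rw [h]; exact hcH)
                  exact Or.inr (hint u ⟨huB, huc⟩ w hwu.symm)
              have hS₁W : S₁ ⊆ deltaHull G T₁ ∪ B := by
                intro t ht
                rcases eq_or_ne t a with rfl | hta
                · exact Or.inr haB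
                · exact Or.inl (subset_hull T₁ ⟨ht, hta⟩)
              have hz₁' : z ∈ deltaHull G T₁ ∪ B := hull_min hS₁W hWconv hz₁
              have hzD : z ∈ D := hH₂D hz₂
              rcases (Set.mem_union _ _ _).mp hz₁' with h | h
              · exact final z h hz₂
              · have hm : z ∈ B ∩ D := ⟨h, hzD⟩
                rw [hDdef, inter_D_eq hcB] at hm
                exact final c hcH (by rw [← hm]; exact hz₂)
            · have hWconv : DeltaConvex G (deltaHull G T₁ ∪ {a}) := by
                intro u v w hu hv huv hwu hwv
                have hua : u ≠ a := by
                  intro he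
                  subst he
                  have hva : v ≠ u := fun h => G.irrefl (h ▸ huv)
                  have hv' : v ∈ deltaHull G T₁ :=
                    ((Set.mem_union _ _ _).mp hv).resolve_right hva
                  have hvB : v ∈ B := hint u haA v huv
                  have hm : v ∈ B ∩ D := ⟨hvB, hHD hv'⟩
                  rw [hDdef, inter_D_eq hcB] at hm
                  exact hcH (by rw [← hm]; exact hv')
                have hva : v ≠ a := by
                  intro he
                  subst he
                  have hu' : u ∈ deltaHull G T₁ :=
                    ((Set.mem_union _ _ _).mp hu).resolve_right hua
                  have huB : u ∈ B := hint v haA u huv.symm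
                  have hm : u ∈ B ∩ D := ⟨huB, hHD hu'⟩
                  rw [hDdef, inter_D_eq hcB] at hm
                  exact hcH (by rw [← hm]; exact hu')
                have hu' := ((Set.mem_union _ _ _).mp hu).resolve_right hua
                have hv' := ((Set.mem_union _ _ _).mp hv).resolve_right hva
                by_cases hwD : w ∈ D
                · exact Or.inl (hull_convex T₁ hu' hv' huv hwu hwv)
                · exact (hgood w hwD u v (hHD hu') (hHD hv') huv hwu hwv).elim
              have hS₁W : S₁ ⊆ deltaHull G T₁ ∪ {a} := by
                intro t ht
                rcases eq_or_ne t a with rfl | hta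
                · exact Or.inr rfl
                · exact Or.inl (subset_hull T₁ ⟨ht, hta⟩)
              have hz₁' : z ∈ deltaHull G T₁ ∪ {a} := hull_min hS₁W hWconv hz₁
              have hzD : z ∈ D := hH₂D hz₂
              rcases (Set.mem_union _ _ _).mp hz₁' with h | h
              · exact final z h hz₂
              · exact haD (by rw [← h]; exact hzD)
          rintro ⟨S₁, S₂, hun, hdis, hne₁, hne₂, z, hz₁, hz₂⟩
          have hamem : a ∈ S₁ ∪ S₂ := by rw [hun]; exact Or.inl rfl
          rcases hamem with h | h
          · exact main S₁ S₂ hun hdis hne₁ hne₂ z hz₁ hz₂ h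
          · exact main S₂ S₁ (by rw [Set.union_comm]; exact hun) hdis.symm hne₂ hne₁
              z hz₂ hz₁ h
        · rw [Set.ncard_insert_of_notMem haT (Set.toFinite _), hTcard]
          omega

end Master

end BGaux

/-- If `G` is a finite simple connected block graph (every block complete)
with exactly `ℓ` blocks, then `r_Δ(G) = ℓ + 1`. -/
theorem stmt_16 {V : Type*} [Fintype V] (G : SimpleGraph V) (hconn : G.Connected)
    (hbg : ∀ B : Set V, IsBlock G B → CompleteOn G B)
    (ℓ : ℕ) (hℓ : {B : Set V | IsBlock G B}.ncard = ℓ) :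
    radonNumber G = ℓ + 1 := by
  obtain ⟨hU, hL⟩ := BGaux.master (Fintype.card V) V G hconn hbg le_rfl
  rw [← hℓ]
  obtain ⟨S₀, hS₀, hS₀card⟩ := hL
  have hmem : {C : Set V | IsBlock G C}.ncard + 1
      ∈ {n : ℕ | ∃ S : Set V, RadonIndep G S ∧ S.ncard = n} := ⟨S₀, hS₀, hS₀card⟩
  unfold radonNumber
  apply le_antisymm
  · apply csSup_le ⟨_, hmem⟩
    rintro n ⟨S, hS, rfl⟩
    exact hU S hS
  · apply le_csSup ?_ hmem
    refine ⟨Fintype.card V, ?_⟩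
    rintro n ⟨S, -, rfl⟩
    have := Set.ncard_le_ncard (Set.subset_univ S) Set.finite_univ
    rwa [Set.ncard_univ, Nat.card_eq_fintype_card] at this
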